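/- With a = e^{-βω} and initial diagonal qubit energy E_S (ergotropy zero, so E_S ≤ ω/2), positive ergotropy extraction via some thermal process (z' = z - λh with h = -z(1+a) - 1 + a, λ ∈ (λ₀,1]) is possible if and only if E_S < ω(1 - 1/(2a)); in particular this forces a > 1/2, i.e., ω < T log 2 where T = 1/β. -/

import Mathlib

/-- With `a = e^{-βω}` and an initial diagonal qubit state of
energy `E_S ≤ ω/2` (zero ergotropy), positive ergotropy extraction by some
thermal process (`z ↦ z + λh`, `h = -z(1+a)-1+a`, final ergotropy `> 0`) is
possible iff `E_S < ω(1 - 1/(2a))`; in particular this forces `a > 1/2`,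
i.e. `ω < T log 2` with `T = 1/β`. -/
theorem positive_extraction_iff (β ω E : ℝ) (hβ : 0 < β) (hω : 0 < ω)
    (hE0 : 0 ≤ E) (hE : E ≤ ω/2)
    (a z h : ℝ) (ha : a = Real.exp (-(β*ω)))
    (hzdef : z = 2*E/ω - 1) (hh : h = -z*(1+a) - 1 + a) :
    ((∃ lam ∈ Set.Icc (0:ℝ) 1, 0 < z + lam * h) ↔ E < ω * (1 - 1/(2*a))) ∧
    (E < ω * (1 - 1/(2*a)) → (1/2 < a ∧ ω < (1/β) * Real.log 2)) := by
  have ha0 : 0 < a := ha ▸ Real.exp_pos _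
  have hz0 : z ≤ 0 := by
    rw [hzdef]
    have : 2*E/ω ≤ 1 := by
      rw [div_le_one hω]; linarith
    linarith
  constructor
  · constructor
    · rintro ⟨lam, ⟨hl0, hl1⟩, hpos⟩
      have hgt : 0 < z + h := by
        rcases le_or_gt h 0 with hneg | hposh
        · nlinarith [mul_nonpos_of_nonneg_of_nonpos hl0 hneg]
        · nlinarith
      -- z + h = a*(1-z) - 1 > 0
      have key : ω * (1 - 1/(2*a)) = ω * (2 - 1/a) / 2 := by
        field_simp
      have h1a : a * (1 - z) > 1 := by nlinarith
      have hz : 1/a < 1 - z := by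
        rw [div_lt_iff₀ ha0]; nlinarith
      rw [hzdef] at hz
      have h3 : 2*E/ω < 2 - 1/a := by linarith
      have h2 : 2*E < ω * (2 - 1/a) := by
        rw [div_lt_iff₀ hω] at h3; linarith
      linarith
    · intro hlt
      refine ⟨1, ⟨zero_le_one, le_refl 1⟩, ?_⟩
      have key : ω * (1 - 1/(2*a)) = ω * (2 - 1/a) / 2 := by
        field_simp
      have h2 : 2*E < ω * (2 - 1/a) := by linarith
      have h3 : 2*E/ω < 2 - 1/a := by rw [div_lt_iff₀ hω]; linarith
      have h4 : z < 1 - 1/a := by rw [hzdef]; linarith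
      have h5 : a * (1 - z) > a * (1/a) := by
        apply mul_lt_mul_of_pos_left _ ha0; linarith
      rw [mul_one_div, div_self (ne_of_gt ha0)] at h5
      rw [hh]; ring_nf; nlinarith
  · intro hlt
    have hapos : 1/2 < a := by
      have h1 : 0 < 1 - 1/(2*a) := by
        by_contra hc
        push_neg at hc
        nlinarith [mul_nonpos_of_nonneg_of_nonpos (le_of_lt hω) hc]
      have : 1/(2*a) < 1 := by linarith
      rw [div_lt_one (by linarith : (0:ℝ) < 2*a)] at this
      linarith
    refine ⟨hapos, ?_⟩
    have hlog : Real.log (1/2) < Real.log a :=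
      Real.log_lt_log (by norm_num) hapos
    rw [ha, Real.log_exp, one_div, Real.log_inv] at hlog
    have : β * ω < Real.log 2 := by linarith
    rw [one_div, ← div_eq_inv_mul, lt_div_iff₀ hβ]
    linarith
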